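/- Let g, h : ℝ → ℝ be C¹ functions and a < b. Then the L¹-norm of the difference of the derivatives of the convex envelopes is bounded by the L¹-norm of the difference of the derivatives: ∫_a^b |(conv_{[a,b]} g)'(τ) − (conv_{[a,b]} h)'(τ)| dτ ≤ ∫_a^b |g'(τ) − h'(τ)| dτ. -/

import Mathlib

open Set

/-- The convex envelope of `g` on the interval `[a,b]`: the pointwise supremum of all
convex functions on `[a,b]` lying below `g` on `[a,b]`. -/
noncomputable def convEnv (a b : ℝ) (g : ℝ → ℝ) : ℝ → ℝ :=
  fun u => sSup {y : ℝ | ∃ h : ℝ → ℝ, ConvexOn ℝ (Set.Icc a b) h ∧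
    (∀ x ∈ Set.Icc a b, h x ≤ g x) ∧ y = h u}

namespace StmtAux

open Filter Topology MeasureTheory intervalIntegral

variable {a b K : ℝ} {f : ℝ → ℝ}

/-- The admissibility predicate. -/
def Adm (a b : ℝ) (f φ : ℝ → ℝ) : Prop :=
  ConvexOn ℝ (Set.Icc a b) φ ∧ ∀ x ∈ Set.Icc a b, φ x ≤ f x

lemma convEnv_eq (u : ℝ) :
    convEnv a b f u = sSup {y : ℝ | ∃ φ : ℝ → ℝ, Adm a b f φ ∧ y = φ u} := by
  unfold convEnv Adm
  congr 1
  ext y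
  constructor
  · rintro ⟨φ, h1, h2, h3⟩; exact ⟨φ, ⟨h1, h2⟩, h3⟩
  · rintro ⟨φ, ⟨h1, h2⟩, h3⟩; exact ⟨φ, h1, h2, h3⟩

lemma affine_convexOn (k c : ℝ) : ConvexOn ℝ (Set.Icc a b) (fun x => k * x + c) := by
  refine ⟨convex_Icc a b, fun x _ y _ s t hs ht hst => le_of_eq ?_⟩
  simp only [smul_eq_mul]
  linear_combination (-c) * hst

lemma env_bddAbove (hu : u ∈ Set.Icc a b) :
    BddAbove {y : ℝ | ∃ φ : ℝ → ℝ, Adm a b f φ ∧ y = φ u} := by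
  refine ⟨f u, ?_⟩
  rintro z ⟨φ, hφ, rfl⟩
  exact hφ.2 u hu

lemma le_env {φ : ℝ → ℝ} (hφ : Adm a b f φ) {u : ℝ} (hu : u ∈ Set.Icc a b) :
    φ u ≤ convEnv a b f u := by
  rw [convEnv_eq]
  exact le_csSup (env_bddAbove hu) ⟨φ, hφ, rfl⟩

section Lip

variable (hab : a < b) (hK0 : 0 ≤ K)
  (hK : ∀ x ∈ Set.Icc a b, ∀ y ∈ Set.Icc a b, |f x - f y| ≤ K * |x - y|)

include hab hK0 hK

lemma adm_left : Adm a b f (fun x => (-K) * x + (f a + K * a)) := by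
  refine ⟨affine_convexOn _ _, fun x hx => ?_⟩
  have h1 := hK a (left_mem_Icc.2 hab.le) x hx
  have h2 : |a - x| = x - a := by
    rw [abs_sub_comm]; exact abs_of_nonneg (sub_nonneg.2 hx.1)
  have h3 : f a - f x ≤ |f a - f x| := le_abs_self _
  rw [h2] at h1
  show -K * x + (f a + K * a) ≤ f x
  linarith

lemma adm_right : Adm a b f (fun x => K * x + (f b - K * b)) := by
  refine ⟨affine_convexOn _ _, fun x hx => ?_⟩
  have h1 := hK b (right_mem_Icc.2 hab.le) x hx
  have h2 : |b - x| = b - x := abs_of_nonneg (sub_nonneg.2 hx.2)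
  have h3 : f b - f x ≤ |f b - f x| := le_abs_self _
  rw [h2] at h1
  show K * x + (f b - K * b) ≤ f x
  linarith

lemma env_le_self {u : ℝ} (hu : u ∈ Set.Icc a b) : convEnv a b f u ≤ f u := by
  rw [convEnv_eq]
  refine csSup_le ⟨(fun x => (-K) * x + (f a + K * a)) u, ⟨_, adm_left hab hK0 hK, rfl⟩⟩ ?_
  rintro z ⟨φ, hφ, rfl⟩
  exact hφ.2 u hu

lemma env_endpoint_left : convEnv a b f a = f a := by
  refine le_antisymm (env_le_self hab hK0 hK (left_mem_Icc.2 hab.le)) ?_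
  have := le_env (adm_left hab hK0 hK) (left_mem_Icc.2 hab.le)
  simpa using this.trans_eq' (by ring)

lemma env_endpoint_right : convEnv a b f b = f b := by
  refine le_antisymm (env_le_self hab hK0 hK (right_mem_Icc.2 hab.le)) ?_
  have := le_env (adm_right hab hK0 hK) (right_mem_Icc.2 hab.le)
  simpa using this.trans_eq' (by ring)

/-- any affine function below `f` on `[a,b]` is below the envelope. -/
lemma affine_le_env {s c : ℝ} (hle : ∀ x ∈ Set.Icc a b, s * x + c ≤ f x) :
    ∀ u ∈ Set.Icc a b, s * u + c ≤ convEnv a b f u := fun u hu =>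
  le_env ⟨affine_convexOn s c, hle⟩ hu

lemma env_convexOn : ConvexOn ℝ (Set.Icc a b) (convEnv a b f) := by
  refine ⟨convex_Icc a b, fun x hx y hy s t hs ht hst => ?_⟩
  rw [convEnv_eq (s • x + t • y)]
  have hxy : s • x + t • y ∈ Set.Icc a b := (convex_Icc a b) hx hy hs ht hst
  refine csSup_le ⟨(fun z => (-K) * z + (f a + K * a)) (s • x + t • y),
    ⟨_, adm_left hab hK0 hK, rfl⟩⟩ ?_
  rintro z ⟨φ, hφ, rfl⟩
  calc φ (s • x + t • y) ≤ s • φ x + t • φ y := hφ.1.2 hx hy hs ht hst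
    _ ≤ s • convEnv a b f x + t • convEnv a b f y := by
        have h1 := le_env hφ hx
        have h2 := le_env hφ hy
        simp only [smul_eq_mul]
        nlinarith

end Lip

end StmtAux

section Part2

namespace StmtAux

open Set Filter Topology MeasureTheory intervalIntegral

variable {a b K : ℝ} {f : ℝ → ℝ}

section Lip

variable (hab : a < b) (hK0 : 0 ≤ K)
  (hK : ∀ x ∈ Set.Icc a b, ∀ y ∈ Set.Icc a b, |f x - f y| ≤ K * |x - y|)

include hab hK0 hK

lemma env_slope_le {x y : ℝ} (hx : x ∈ Set.Icc a b) (hy : y ∈ Set.Icc a b) (hxy : x < y) :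
    convEnv a b f y - convEnv a b f x ≤ K * (y - x) := by
  set E := convEnv a b f with hE
  have hEb : E b = f b := env_endpoint_right hab hK0 hK
  have hlow : ∀ u ∈ Set.Icc a b, f b - K * (b - u) ≤ E u := by
    intro u hu
    have h := le_env (adm_right hab hK0 hK) hu
    show f b - K * (b - u) ≤ convEnv a b f u
    linarith
  have hxb : x < b := lt_of_lt_of_le hxy hy.2
  have key : (E y - E x) / (y - x) ≤ (E b - E x) / (b - x) := by
    rcases eq_or_lt_of_le hy.2 with h | h
    · rw [h]
    · exact (env_convexOn hab hK0 hK).secant_mono hx hy (right_mem_Icc.2 hab.le)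
        (ne_of_gt hxy) (ne_of_gt hxb) h.le
  have hb' : (E b - E x) / (b - x) ≤ K := by
    rw [div_le_iff₀ (sub_pos.2 hxb)]
    have := hlow x hx
    rw [hEb] at *
    nlinarith
  have := key.trans hb'
  rw [div_le_iff₀ (sub_pos.2 hxy)] at this
  linarith

lemma env_slope_ge {x y : ℝ} (hx : x ∈ Set.Icc a b) (hy : y ∈ Set.Icc a b) (hxy : x < y) :
    -K * (y - x) ≤ convEnv a b f y - convEnv a b f x := by
  set E := convEnv a b f with hE
  have hEa : E a = f a := env_endpoint_left hab hK0 hK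
  have hlow : ∀ u ∈ Set.Icc a b, f a - K * (u - a) ≤ E u := by
    intro u hu
    have h := le_env (adm_left hab hK0 hK) hu
    show f a - K * (u - a) ≤ convEnv a b f u
    linarith
  have hay : a < y := lt_of_le_of_lt hx.1 hxy
  have key : (E a - E y) / (a - y) ≤ (E x - E y) / (x - y) := by
    rcases eq_or_lt_of_le hx.1 with h | h
    · rw [h]
    · exact (env_convexOn hab hK0 hK).secant_mono hy (left_mem_Icc.2 hab.le) hx
        (ne_of_lt hay) (ne_of_lt hxy) hx.1
  have ha' : -K ≤ (E a - E y) / (a - y) := by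
    rw [le_div_iff_of_neg (by linarith : a - y < 0)]
    have := hlow y hy
    rw [hEa] at *
    nlinarith
  have h2 := ha'.trans key
  rw [le_div_iff_of_neg (by linarith : x - y < 0)] at h2
  nlinarith

lemma env_continuousOn : ContinuousOn (convEnv a b f) (Set.Icc a b) := by
  have : LipschitzOnWith (Real.toNNReal K) (convEnv a b f) (Set.Icc a b) := by
    apply LipschitzOnWith.of_dist_le_mul
    intro x hx y hy
    rw [Real.dist_eq, Real.dist_eq, Real.coe_toNNReal _ hK0]
    rcases lt_trichotomy x y with h | h | h
    · have h1 := env_slope_le hab hK0 hK hx hy h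
      have h2 := env_slope_ge hab hK0 hK hx hy h
      rw [abs_of_neg (by linarith : x - y < 0), abs_sub_comm]
      rw [abs_le]
      constructor <;> nlinarith
    · simp [h]
    · have h1 := env_slope_le hab hK0 hK hy hx h
      have h2 := env_slope_ge hab hK0 hK hy hx h
      rw [abs_of_pos (by linarith : 0 < x - y)]
      rw [abs_le]
      constructor <;> nlinarith
  exact this.continuousOn

end Lip

/-- Supporting line for a convex function with a derivative within `Icc a b`. -/
lemma supline {E : ℝ → ℝ} (hE : ConvexOn ℝ (Set.Icc a b) E) {x₀ p y : ℝ}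
    (hx₀ : x₀ ∈ Set.Icc a b) (hy : y ∈ Set.Icc a b)
    (hd : HasDerivWithinAt E p (Set.Icc a b) x₀) :
    E x₀ + p * (y - x₀) ≤ E y := by
  have hT : Filter.Tendsto (slope E x₀) (nhdsWithin x₀ (Set.Icc a b \ {x₀})) (nhds p) :=
    hasDerivWithinAt_iff_tendsto_slope.mp hd
  rcases lt_trichotomy y x₀ with h | h | h
  · -- y < x₀
    have hsub : Set.Ioo y x₀ ⊆ Set.Icc a b \ {x₀} := fun t ht =>
      ⟨⟨hy.1.trans ht.1.le, ht.2.le.trans hx₀.2⟩, ne_of_lt ht.2⟩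
    have hne : (nhdsWithin x₀ (Set.Ioo y x₀)).NeBot := by
      apply mem_closure_iff_nhdsWithin_neBot.mp
      rw [closure_Ioo (ne_of_lt h)]
      exact ⟨h.le, le_rfl⟩
    have hT' : Filter.Tendsto (slope E x₀) (nhdsWithin x₀ (Set.Ioo y x₀)) (nhds p) :=
      hT.mono_left (nhdsWithin_mono _ hsub)
    have hbound : ∀ t ∈ Set.Ioo y x₀, slope E x₀ y ≤ slope E x₀ t := by
      intro t ht
      have := hE.secant_mono hx₀ hy ⟨hy.1.trans ht.1.le, ht.2.le.trans hx₀.2⟩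
        (ne_of_lt h) (ne_of_lt ht.2) ht.1.le
      simpa [slope_def_field] using this
    have hle : slope E x₀ y ≤ p :=
      ge_of_tendsto hT' (eventually_nhdsWithin_of_forall hbound)
    rw [slope_def_field, div_le_iff_of_neg (by linarith : y - x₀ < 0)] at hle
    linarith
  · subst h; simp
  · -- x₀ < y
    have hsub : Set.Ioo x₀ y ⊆ Set.Icc a b \ {x₀} := fun t ht =>
      ⟨⟨hx₀.1.trans ht.1.le, ht.2.le.trans hy.2⟩, (ne_of_gt ht.1)⟩
    have hne : (nhdsWithin x₀ (Set.Ioo x₀ y)).NeBot := by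
      apply mem_closure_iff_nhdsWithin_neBot.mp
      rw [closure_Ioo (ne_of_lt h)]
      exact ⟨le_rfl, h.le⟩
    have hT' : Filter.Tendsto (slope E x₀) (nhdsWithin x₀ (Set.Ioo x₀ y)) (nhds p) :=
      hT.mono_left (nhdsWithin_mono _ hsub)
    have hbound : ∀ t ∈ Set.Ioo x₀ y, slope E x₀ t ≤ slope E x₀ y := by
      intro t ht
      have := hE.secant_mono hx₀ ⟨hx₀.1.trans ht.1.le, ht.2.le.trans hy.2⟩ hy
        (ne_of_gt ht.1) (ne_of_gt h) ht.2.le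
      simpa [slope_def_field] using this
    have hle : p ≤ slope E x₀ y :=
      le_of_tendsto hT' (eventually_nhdsWithin_of_forall hbound)
    rw [slope_def_field, le_div_iff₀ (by linarith : 0 < y - x₀)] at hle
    linarith

/-- The within-`Icc` derivative of a convex function is monotone. -/
lemma deriv_monoOn {E m : ℝ → ℝ} (hE : ConvexOn ℝ (Set.Icc a b) E)
    (hm : ∀ u ∈ Set.Icc a b, HasDerivWithinAt E (m u) (Set.Icc a b) u) :
    MonotoneOn m (Set.Icc a b) := by
  intro x hx y hy hxy
  rcases eq_or_lt_of_le hxy with h | h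
  · rw [h]
  · have s1 := supline hE hx hy (hm x hx)
    have s2 := supline hE hy hx (hm y hy)
    nlinarith [sub_pos.2 h]

/-- The core comparison lemma. -/
lemma core (hab : a < b) {U V EU EV : ℝ → ℝ} {x₀ p q : ℝ}
    (hUcont : ContinuousOn U (Set.Icc a b))
    (hEUle : ∀ x ∈ Set.Icc a b, EU x ≤ U x)
    (hEUmin : ∀ s c : ℝ, (∀ x ∈ Set.Icc a b, s * x + c ≤ U x) →
      ∀ x ∈ Set.Icc a b, s * x + c ≤ EU x)
    (hEVle : ∀ x ∈ Set.Icc a b, EV x ≤ V x)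
    (hEVmin : ∀ s c : ℝ, (∀ x ∈ Set.Icc a b, s * x + c ≤ V x) →
      ∀ x ∈ Set.Icc a b, s * x + c ≤ EV x)
    (hUV : MonotoneOn (fun x => V x - U x) (Set.Icc a b))
    (hx₀ : x₀ ∈ Set.Ico a b)
    (hp : ∀ y ∈ Set.Icc a b, x₀ ≤ y → EU x₀ + p * (y - x₀) ≤ EU y)
    (hqL : ∀ t ∈ Set.Icc a b, t ≤ x₀ → EV x₀ + q * (t - x₀) ≤ EV t)
    (hqD : ∀ s, q < s → ∃ y ∈ Set.Icc a b, x₀ < y ∧ EV y - EV x₀ < s * (y - x₀)) :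
    p ≤ q := by
  by_contra hpq
  push_neg at hpq
  set s := (q + p) / 2 with hs_def
  have hqs : q < s := by rw [hs_def]; linarith
  have hsp : s < p := by rw [hs_def]; linarith
  have hx₀I : x₀ ∈ Set.Icc a b := ⟨hx₀.1, hx₀.2.le⟩
  obtain ⟨t₁, ht₁, hmin⟩ := isCompact_Icc.exists_isMinOn (Set.nonempty_Icc.2 hab.le)
    (hUcont.sub ((continuous_const.mul continuous_id).continuousOn) :
      ContinuousOn (fun t => U t - s * t) (Set.Icc a b))
  have hmin' : ∀ x ∈ Set.Icc a b, U t₁ - s * t₁ ≤ U x - s * x := fun x hx => hmin hx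
  have hAff : ∀ x ∈ Set.Icc a b, s * x + (U t₁ - s * t₁) ≤ U x := by
    intro x hx; have := hmin' x hx; linarith
  have hEU' := hEUmin s _ hAff
  -- Step 1 : t₁ ≤ x₀
  have ht₁x₀ : t₁ ≤ x₀ := by
    by_contra hcon
    push_neg at hcon
    have h1 := hp t₁ ht₁ hcon.le
    have h2 := hEU' x₀ hx₀I
    have h3 := hEUle t₁ ht₁
    nlinarith [mul_pos (sub_pos.2 hsp) (sub_pos.2 hcon)]
  -- Step γ : there is a point where V - s·id dips below (EV - s·id)(x₀)
  have hex : ∃ t₂ ∈ Set.Icc a b, V t₂ - s * t₂ < EV x₀ - s * x₀ := by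
    by_contra hno
    push_neg at hno
    have hAff2 : ∀ x ∈ Set.Icc a b, s * x + (EV x₀ - s * x₀) ≤ V x := by
      intro x hx; have := hno x hx; linarith
    have h5 := hEVmin s _ hAff2
    obtain ⟨y₀, hy₀I, hy₀gt, hy₀lt⟩ := hqD s hqs
    have := h5 y₀ hy₀I
    linarith
  obtain ⟨t₂, ht₂, hlt⟩ := hex
  -- Step δ : t₂ > x₀
  have ht₂x₀ : x₀ < t₂ := by
    by_contra hcon
    push_neg at hcon
    have h1 := hqL t₂ ht₂ hcon
    have h2 := hEVle t₂ ht₂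
    nlinarith [mul_nonneg (by linarith : (0:ℝ) ≤ s - q) (by linarith : (0:ℝ) ≤ x₀ - t₂)]
  -- Step ε + ζ : contradiction
  have hcup : V t₁ - U t₁ ≤ V t₂ - U t₂ := hUV ht₁ ht₂ (ht₁x₀.trans ht₂x₀.le)
  have hU12 : U t₁ - s * t₁ ≤ U t₂ - s * t₂ := hmin' t₂ ht₂
  have hq1 := hqL t₁ ht₁ ht₁x₀
  have hV1 := hEVle t₁ ht₁
  nlinarith [mul_nonneg (by linarith : (0:ℝ) ≤ s - q) (by linarith : (0:ℝ) ≤ x₀ - t₁)]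

end StmtAux

end Part2

section Part3

namespace StmtAux

open Set Filter Topology MeasureTheory intervalIntegral

variable {a b K : ℝ} {f : ℝ → ℝ}

/-- right derivative of the convex envelope. -/
noncomputable def renv (a b : ℝ) (f : ℝ → ℝ) (x : ℝ) : ℝ :=
  sInf ((fun y => (convEnv a b f y - convEnv a b f x) / (y - x)) '' Set.Ioo x b)

section Lip

variable (hab : a < b) (hK0 : 0 ≤ K)
  (hK : ∀ x ∈ Set.Icc a b, ∀ y ∈ Set.Icc a b, |f x - f y| ≤ K * |x - y|)

include hab hK0 hK

lemma renv_bddBelow {x : ℝ} (hx : x ∈ Set.Ico a b) :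
    -K ∈ lowerBounds ((fun y => (convEnv a b f y - convEnv a b f x) / (y - x)) ''
      Set.Ioo x b) := by
  rintro z ⟨y, hy, rfl⟩
  have h := env_slope_ge hab hK0 hK ⟨hx.1, hx.2.le⟩ ⟨hx.1.trans hy.1.le, hy.2.le⟩ hy.1
  rw [le_div_iff₀ (sub_pos.2 hy.1)]
  nlinarith

lemma renv_nonempty {x : ℝ} (hx : x ∈ Set.Ico a b) :
    ((fun y => (convEnv a b f y - convEnv a b f x) / (y - x)) '' Set.Ioo x b).Nonempty :=
  ⟨_, Set.mem_image_of_mem _ (⟨by linarith [hx.2], by linarith [hx.2]⟩ :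
    (x + b) / 2 ∈ Set.Ioo x b)⟩

lemma renv_le_slope {x y : ℝ} (hx : x ∈ Set.Ico a b) (hy : y ∈ Set.Ioo x b) :
    renv a b f x ≤ (convEnv a b f y - convEnv a b f x) / (y - x) :=
  csInf_le ⟨-K, renv_bddBelow hab hK0 hK hx⟩ (Set.mem_image_of_mem _ hy)

lemma renv_le_K {x : ℝ} (hx : x ∈ Set.Ico a b) : renv a b f x ≤ K := by
  have hmem : (x + b) / 2 ∈ Set.Ioo x b := ⟨by linarith [hx.2], by linarith [hx.2]⟩
  refine (renv_le_slope hab hK0 hK hx hmem).trans ?_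
  have h := env_slope_le hab hK0 hK (⟨hx.1, hx.2.le⟩ : x ∈ Set.Icc a b)
    ⟨hx.1.trans hmem.1.le, hmem.2.le⟩ hmem.1
  rw [div_le_iff₀ (sub_pos.2 hmem.1)]
  nlinarith

lemma K_le_renv {x : ℝ} (hx : x ∈ Set.Ico a b) : -K ≤ renv a b f x :=
  le_csInf (renv_nonempty hab hK0 hK hx) (renv_bddBelow hab hK0 hK hx)

/-- slopes from the left are below the right derivative. -/
lemma slope_le_renv {x t : ℝ} (hx : x ∈ Set.Ico a b) (ht : t ∈ Set.Icc a b) (htx : t < x) :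
    (convEnv a b f t - convEnv a b f x) / (t - x) ≤ renv a b f x := by
  apply le_csInf (renv_nonempty hab hK0 hK hx)
  rintro z ⟨y, hy, rfl⟩
  have := (env_convexOn hab hK0 hK).secant_mono (⟨hx.1, hx.2.le⟩ : x ∈ Set.Icc a b) ht
    ⟨hx.1.trans hy.1.le, hy.2.le⟩ (ne_of_lt htx) (ne_of_gt hy.1) (htx.le.trans hy.1.le)
  exact this

/-- descent property. -/
lemma renv_descent {x s : ℝ} (hx : x ∈ Set.Ico a b) (hs : renv a b f x < s) :
    ∃ y ∈ Set.Icc a b, x < y ∧ convEnv a b f y - convEnv a b f x < s * (y - x) := by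
  obtain ⟨z, ⟨y, hy, rfl⟩, hz⟩ := exists_lt_of_csInf_lt (renv_nonempty hab hK0 hK hx) hs
  refine ⟨y, ⟨hx.1.trans hy.1.le, hy.2.le⟩, hy.1, ?_⟩
  rw [div_lt_iff₀ (sub_pos.2 hy.1)] at hz
  linarith

lemma renv_hasDerivWithinAt {x : ℝ} (hx : x ∈ Set.Ico a b) :
    HasDerivWithinAt (convEnv a b f) (renv a b f x) (Set.Ioi x) x := by
  set E := convEnv a b f
  have hmono : MonotoneOn (fun y => (E y - E x) / (y - x)) (Set.Ioo x b) := by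
    intro u hu v hv huv
    exact (env_convexOn hab hK0 hK).secant_mono (⟨hx.1, hx.2.le⟩ : x ∈ Set.Icc a b)
      ⟨hx.1.trans hu.1.le, hu.2.le⟩ ⟨hx.1.trans hv.1.le, hv.2.le⟩
      (ne_of_gt hu.1) (ne_of_gt hv.1) huv
  have hT := MonotoneOn.tendsto_nhdsWithin_Ioo_right
    (Set.nonempty_Ioo.2 hx.2) hmono ⟨-K, renv_bddBelow hab hK0 hK hx⟩
  rw [hasDerivWithinAt_iff_tendsto_slope]
  have hslope : slope E x = fun y => (E y - E x) / (y - x) := by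
    funext y; exact slope_def_field E x y
  have hd : Set.Ioi x \ {x} = Set.Ioi x := Set.diff_singleton_eq_self (by simp)
  rw [hd, hslope]
  exact hT

/-- monotonicity of the right derivative. -/
lemma renv_monoOn : MonotoneOn (renv a b f) (Set.Ioo a b) := by
  intro x hx y hy hxy
  rcases eq_or_lt_of_le hxy with h | h
  · rw [h]
  · have h1 : renv a b f x ≤ (convEnv a b f y - convEnv a b f x) / (y - x) :=
      renv_le_slope hab hK0 hK ⟨hx.1.le, hx.2⟩ ⟨h, hy.2⟩
    have h2 : (convEnv a b f x - convEnv a b f y) / (x - y) ≤ renv a b f y :=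
      slope_le_renv hab hK0 hK ⟨hy.1.le, hy.2⟩ ⟨hx.1.le, hx.2.le⟩ h
    have heq : (convEnv a b f x - convEnv a b f y) / (x - y)
        = (convEnv a b f y - convEnv a b f x) / (y - x) := by
      rw [← neg_div_neg_eq]; ring_nf
    rw [heq] at h2
    exact h1.trans h2

end Lip

end StmtAux

end Part3

open StmtAux Filter MeasureTheory intervalIntegral

theorem stmt8 (a b : ℝ) (hab : a < b) (g h : ℝ → ℝ)
    (hg : ContDiff ℝ 1 g) (hh : ContDiff ℝ 1 h) (m₁ m₂ : ℝ → ℝ)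
    (hm₁ : ∀ u ∈ Set.Icc a b,
      HasDerivWithinAt (convEnv a b g) (m₁ u) (Set.Icc a b) u)
    (hm₂ : ∀ u ∈ Set.Icc a b,
      HasDerivWithinAt (convEnv a b h) (m₂ u) (Set.Icc a b) u) :
    (∫ τ in a..b, |m₁ τ - m₂ τ|) ≤ ∫ τ in a..b, |deriv g τ - deriv h τ| := by
  classical
  have hgd : Continuous (deriv g) := hg.continuous_deriv le_rfl
  have hhd : Continuous (deriv h) := hh.continuous_deriv le_rfl
  have hgdiff : Differentiable ℝ g := hg.differentiable one_ne_zero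
  have hhdiff : Differentiable ℝ h := hh.differentiable one_ne_zero
  set w : ℝ → ℝ := fun τ => max (deriv g τ) (deriv h τ) with hw_def
  have hw : Continuous w := hgd.max hhd
  set W : ℝ → ℝ := fun x => ∫ τ in a..x, w τ with hW_def
  have hWd : ∀ x : ℝ, HasDerivAt W (w x) x := fun x =>
    intervalIntegral.integral_hasDerivAt_right (hw.intervalIntegrable a x)
      ⟨Set.univ, Filter.univ_mem, hw.aestronglyMeasurable.restrict⟩ hw.continuousAt
  -- a common Lipschitz constant
  obtain ⟨Kg, hKg⟩ := isCompact_Icc.exists_bound_of_continuousOn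
    (hgd.continuousOn : ContinuousOn (deriv g) (Set.Icc a b))
  obtain ⟨Kh, hKh⟩ := isCompact_Icc.exists_bound_of_continuousOn
    (hhd.continuousOn : ContinuousOn (deriv h) (Set.Icc a b))
  set K : ℝ := max (max Kg Kh) 0 with hK_def
  have hK0 : 0 ≤ K := le_max_right _ _
  have hKgb : ∀ x ∈ Set.Icc a b, ‖deriv g x‖ ≤ K := fun x hx =>
    (hKg x hx).trans ((le_max_left Kg Kh).trans (le_max_left _ _))
  have hKhb : ∀ x ∈ Set.Icc a b, ‖deriv h x‖ ≤ K := fun x hx =>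
    (hKh x hx).trans ((le_max_right Kg Kh).trans (le_max_left _ _))
  have hKwb : ∀ x ∈ Set.Icc a b, ‖w x‖ ≤ K := by
    intro x hx
    rw [Real.norm_eq_abs]
    rcases max_cases (deriv g x) (deriv h x) with ⟨h1, _⟩ | ⟨h1, _⟩
    · rw [hw_def]; simp only []; rw [h1]; exact hKgb x hx
    · rw [hw_def]; simp only []; rw [h1]; exact hKhb x hx
  have lipOf : ∀ (f : ℝ → ℝ) (f' : ℝ → ℝ), (∀ x : ℝ, HasDerivAt f (f' x) x) →
      (∀ x ∈ Set.Icc a b, ‖f' x‖ ≤ K) →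
      ∀ x ∈ Set.Icc a b, ∀ y ∈ Set.Icc a b, |f x - f y| ≤ K * |x - y| := by
    intro f f' hf hb' x hx y hy
    have := (convex_Icc a b).norm_image_sub_le_of_norm_hasDerivWithin_le
      (fun z hz => (hf z).hasDerivWithinAt) hb' hy hx
    simpa [Real.norm_eq_abs] using this
  have hgK := lipOf g (deriv g) (fun x => (hgdiff x).hasDerivAt) hKgb
  have hhK := lipOf h (deriv h) (fun x => (hhdiff x).hasDerivAt) hKhb
  have hWK := lipOf W w hWd hKwb
  -- envelopes
  set G := convEnv a b g with hG_def
  set H := convEnv a b h with hH_def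
  set EW := convEnv a b W with hEW_def
  have hGconv : ConvexOn ℝ (Set.Icc a b) G := env_convexOn hab hK0 hgK
  have hHconv : ConvexOn ℝ (Set.Icc a b) H := env_convexOn hab hK0 hhK
  -- monotonicity and integrability of m₁, m₂
  have hm₁mono : MonotoneOn m₁ (Set.Icc a b) := deriv_monoOn hGconv hm₁
  have hm₂mono : MonotoneOn m₂ (Set.Icc a b) := deriv_monoOn hHconv hm₂
  have hm₁int : IntervalIntegrable m₁ volume a b := by
    apply MonotoneOn.intervalIntegrable; rwa [Set.uIcc_of_le hab.le]
  have hm₂int : IntervalIntegrable m₂ volume a b := by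
    apply MonotoneOn.intervalIntegrable; rwa [Set.uIcc_of_le hab.le]
  -- FTC for the envelopes G and H
  have envFTC : ∀ (f : ℝ → ℝ) (m : ℝ → ℝ),
      (∀ u ∈ Set.Icc a b, HasDerivWithinAt (convEnv a b f) (m u) (Set.Icc a b) u) →
      IntervalIntegrable m volume a b →
      ∫ τ in a..b, m τ = convEnv a b f b - convEnv a b f a := by
    intro f m hm hint
    refine intervalIntegral.integral_eq_sub_of_hasDeriv_right_of_le hab.le
      (fun x hx => (hm x hx).continuousWithinAt) (fun x hx => ?_) hint
    exact (hm x ⟨hx.1.le, hx.2.le⟩).mono_of_mem_nhdsWithin (Icc_mem_nhdsGT_of_mem ⟨hx.1.le, hx.2⟩)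
  have hIm₁ : ∫ τ in a..b, m₁ τ = g b - g a := by
    rw [envFTC g m₁ hm₁ hm₁int, env_endpoint_left hab hK0 hgK, env_endpoint_right hab hK0 hgK]
  have hIm₂ : ∫ τ in a..b, m₂ τ = h b - h a := by
    rw [envFTC h m₂ hm₂ hm₂int, env_endpoint_left hab hK0 hhK, env_endpoint_right hab hK0 hhK]
  -- the right derivative of the envelope of W
  set m₃ : ℝ → ℝ := fun x => if x ∈ Set.Ioo a b then renv a b W x else if x ≤ a then -K else K
    with hm₃_def
  have hm₃Ioo : ∀ x ∈ Set.Ioo a b, m₃ x = renv a b W x := fun x hx => if_pos hx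
  have hm₃mono : MonotoneOn m₃ (Set.Icc a b) := by
    intro x hx y hy hxy
    rcases eq_or_lt_of_le hxy with hxy' | hxy'
    · rw [hxy']
    · have hxv : m₃ x = if x ∈ Set.Ioo a b then renv a b W x else -K := by
        show (if x ∈ Set.Ioo a b then renv a b W x else if x ≤ a then -K else K) = _
        by_cases hcase : x ∈ Set.Ioo a b
        · rw [if_pos hcase, if_pos hcase]
        · have hxa : x = a := by
            rcases eq_or_lt_of_le hx.1 with h1 | h1
            · exact h1.symm
            · exact absurd ⟨h1, hxy'.trans_le hy.2⟩ hcase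
          rw [if_neg hcase, if_neg hcase, if_pos hxa.le]
      have hyv : m₃ y = if y ∈ Set.Ioo a b then renv a b W y else K := by
        show (if y ∈ Set.Ioo a b then renv a b W y else if y ≤ a then -K else K) = _
        by_cases hcase : y ∈ Set.Ioo a b
        · rw [if_pos hcase, if_pos hcase]
        · have hyb : y = b := by
            rcases eq_or_lt_of_le hy.2 with h2 | h2
            · exact h2
            · exact absurd ⟨hx.1.trans_lt hxy', h2⟩ hcase
          rw [if_neg hcase, if_neg hcase, if_neg (by rw [hyb]; exact not_le.2 hab)]
      rw [hxv, hyv]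
      by_cases hx' : x ∈ Set.Ioo a b <;> by_cases hy' : y ∈ Set.Ioo a b
      · rw [if_pos hx', if_pos hy']; exact renv_monoOn hab hK0 hWK hx' hy' hxy
      · rw [if_pos hx', if_neg hy']; exact renv_le_K hab hK0 hWK ⟨hx'.1.le, hx'.2⟩
      · rw [if_neg hx', if_pos hy']; exact K_le_renv hab hK0 hWK ⟨hy'.1.le, hy'.2⟩
      · rw [if_neg hx', if_neg hy']; linarith
  have hm₃int : IntervalIntegrable m₃ volume a b := by
    apply MonotoneOn.intervalIntegrable; rwa [Set.uIcc_of_le hab.le]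
  have hIm₃ : ∫ τ in a..b, m₃ τ = ∫ τ in a..b, w τ := by
    have := intervalIntegral.integral_eq_sub_of_hasDeriv_right_of_le hab.le
      (env_continuousOn hab hK0 hWK) (fun x hx => ?_) hm₃int
    · rw [this, env_endpoint_left hab hK0 hWK, env_endpoint_right hab hK0 hWK]
      simp [hW_def]
    · rw [hm₃Ioo x hx]
      exact renv_hasDerivWithinAt hab hK0 hWK ⟨hx.1.le, hx.2⟩
  -- pointwise comparison on Ioo
  have hcomp : ∀ (f : ℝ → ℝ) (m : ℝ → ℝ) (hfd : Differentiable ℝ f)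
      (hfK : ∀ x ∈ Set.Icc a b, ∀ y ∈ Set.Icc a b, |f x - f y| ≤ K * |x - y|)
      (hfw : ∀ x : ℝ, deriv f x ≤ w x)
      (hm : ∀ u ∈ Set.Icc a b, HasDerivWithinAt (convEnv a b f) (m u) (Set.Icc a b) u),
      ∀ x ∈ Set.Ioo a b, m x ≤ renv a b W x := by
    intro f m hfd hfK hfw hm x hx
    have hxIco : x ∈ Set.Ico a b := ⟨hx.1.le, hx.2⟩
    have hxIcc : x ∈ Set.Icc a b := ⟨hx.1.le, hx.2.le⟩
    refine core hab (U := f) (V := W) (EU := convEnv a b f) (EV := EW)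
      hfd.continuous.continuousOn
      (fun z hz => env_le_self hab hK0 hfK hz)
      (fun s c hle => affine_le_env hab hK0 hfK hle)
      (fun z hz => env_le_self hab hK0 hWK hz)
      (fun s c hle => affine_le_env hab hK0 hWK hle)
      ?_ hxIco
      (fun y hy _ => supline (env_convexOn hab hK0 hfK) hxIcc hy (hm x hxIcc))
      (fun t ht htx => ?_) (fun s hs => renv_descent hab hK0 hWK hxIco hs)
    · -- MonotoneOn (W - f)
      have hWdiff : Differentiable ℝ W := fun z => (hWd z).differentiableAt
      apply monotoneOn_of_deriv_nonneg (convex_Icc a b)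
        ((hWdiff.sub hfd).continuous.continuousOn)
      · intro z _
        exact ((hWd z).sub (hfd z).hasDerivAt).differentiableAt.differentiableWithinAt
      · intro z _
        rw [((hWd z).sub (hfd z).hasDerivAt).deriv]
        have := hfw z
        linarith
    · -- left slope bound for EW
      rcases eq_or_lt_of_le htx with rfl | htx'
      · simp
      · have hsl := slope_le_renv hab hK0 hWK hxIco ht htx'
        rw [div_le_iff_of_neg (by linarith : t - x < 0)] at hsl
        rw [hEW_def]
        linarith
  have hcomp₁ : ∀ x ∈ Set.Ioo a b, m₁ x ≤ m₃ x := by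
    intro x hx; rw [hm₃Ioo x hx]
    exact hcomp g m₁ hgdiff hgK (fun x => le_max_left _ _) hm₁ x hx
  have hcomp₂ : ∀ x ∈ Set.Ioo a b, m₂ x ≤ m₃ x := by
    intro x hx; rw [hm₃Ioo x hx]
    exact hcomp h m₂ hhdiff hhK (fun x => le_max_right _ _) hm₂ x hx
  -- integrability of the max
  have hMmono : MonotoneOn (fun τ => max (m₁ τ) (m₂ τ)) (Set.Icc a b) :=
    fun x hx y hy hxy => max_le_max (hm₁mono hx hy hxy) (hm₂mono hx hy hxy)
  have hMint : IntervalIntegrable (fun τ => max (m₁ τ) (m₂ τ)) volume a b := by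
    apply MonotoneOn.intervalIntegrable; rwa [Set.uIcc_of_le hab.le]
  -- ∫ max(m₁,m₂) ≤ ∫ m₃
  have hIM : (∫ τ in a..b, max (m₁ τ) (m₂ τ)) ≤ ∫ τ in a..b, m₃ τ := by
    refine intervalIntegral.integral_mono_ae_restrict hab.le hMint hm₃int ?_
    have h0 : volume ({a, b} : Set ℝ) = 0 :=
      ((Set.countable_singleton b).insert a).measure_zero volume
    have h2 : ∀ᵐ τ ∂volume, τ ∉ ({a, b} : Set ℝ) := by
      exact measure_eq_zero_iff_ae_notMem.mp h0
    filter_upwards [ae_restrict_mem measurableSet_Icc, ae_restrict_of_ae h2] with τ hτI hτn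
    have hτab : τ ≠ a ∧ τ ≠ b := by simpa using hτn
    have hτIoo : τ ∈ Set.Ioo a b :=
      ⟨lt_of_le_of_ne hτI.1 (Ne.symm hτab.1), lt_of_le_of_ne hτI.2 hτab.2⟩
    exact max_le (hcomp₁ τ hτIoo) (hcomp₂ τ hτIoo)
  -- rewrite both sides using |x - y| = 2 * max x y - x - y
  have hid : ∀ x y : ℝ, |x - y| = 2 * max x y - x - y := by
    intro x y
    rcases le_total x y with hxy | hxy
    · rw [max_eq_right hxy, abs_of_nonpos (by linarith)]; ring
    · rw [max_eq_left hxy, abs_of_nonneg (by linarith)]; ring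
  have hgint : IntervalIntegrable (deriv g) volume a b := hgd.intervalIntegrable a b
  have hhint : IntervalIntegrable (deriv h) volume a b := hhd.intervalIntegrable a b
  have hwint : IntervalIntegrable w volume a b := hw.intervalIntegrable a b
  have hIg : ∫ τ in a..b, deriv g τ = g b - g a :=
    intervalIntegral.integral_deriv_eq_sub (fun x _ => (hgdiff x)) hgint
  have hIh : ∫ τ in a..b, deriv h τ = h b - h a :=
    intervalIntegral.integral_deriv_eq_sub (fun x _ => (hhdiff x)) hhint
  have hLHS : (∫ τ in a..b, |m₁ τ - m₂ τ|)
      = 2 * (∫ τ in a..b, max (m₁ τ) (m₂ τ)) - (g b - g a) - (h b - h a) := by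
    rw [intervalIntegral.integral_congr
      (fun τ _ => hid (m₁ τ) (m₂ τ) : Set.EqOn _ (fun τ => 2 * max (m₁ τ) (m₂ τ) - m₁ τ - m₂ τ) _)]
    rw [intervalIntegral.integral_sub ((hMint.const_mul 2).sub hm₁int) hm₂int,
      intervalIntegral.integral_sub (hMint.const_mul 2) hm₁int,
      intervalIntegral.integral_const_mul, hIm₁, hIm₂]
  have hRHS : (∫ τ in a..b, |deriv g τ - deriv h τ|)
      = 2 * (∫ τ in a..b, w τ) - (g b - g a) - (h b - h a) := by
    rw [intervalIntegral.integral_congr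
      (fun τ _ => hid (deriv g τ) (deriv h τ) :
        Set.EqOn _ (fun τ => 2 * w τ - deriv g τ - deriv h τ) _)]
    rw [intervalIntegral.integral_sub ((hwint.const_mul 2).sub hgint) hhint,
      intervalIntegral.integral_sub (hwint.const_mul 2) hgint,
      intervalIntegral.integral_const_mul, hIg, hIh]
  rw [hLHS, hRHS]
  have := hIM.trans_eq hIm₃
  linarith
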